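/- arXiv:1608.01008 — 2 statements merged into one kernel-verified Lean document; each statement's English description precedes it below -/
import Mathlib

section
/- Let P be the transition matrix of an irreducible Markov chain on a finite state space Ω that is reversible with respect to a stationary distribution μ with μ(x) > 0 for all x. Let E = {(X,Y) ∈ Ω×Ω : X ≠ Y, P(X,Y) > 0}, and for an edge e = (X,Y) ∈ E set Q(e) = μ(X)P(X,Y). A simple path from X to Y is a finite sequence of pairwise distinct states beginning at X and ending at Y whose consecutive pairs lie in E; let H be the set of all simple paths between pairs of distinct states and H_{XY} those from X to Y. Let f : H → ℝ≥0 be a multicommodity flow, i.e., Σ_{p∈H_{XY}} f(p) = μ(X)μ(Y) for all X ≠ Y, and define ρ̄(f) = max_{e∈E} (1/Q(e))·Σ_{p∈H, p traverses e} f(p)·len(p), where len(p) is the number of edges of p. Then every eigenvalue λ of P with λ ≠ 1 satisfies λ ≤ 1 − 1/ρ̄(f). -/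
open Finset
open scoped Classical

section helpers
variable {α : Type*}

lemma telescope_zip (g : α → ℝ) :
    ∀ (p : List α) (a b : α), p.head? = some a → p.getLast? = some b →
      ((p.zip p.tail).map (fun e => g e.1 - g e.2)).sum = g a - g b
  | [], a, b => by simp
  | [x], a, b => by
      intro ha hb
      simp only [List.head?_cons, Option.some.injEq] at ha
      simp only [List.getLast?_singleton, Option.some.injEq] at hb
      subst ha; subst hb; simp
  | x :: y :: t, a, b => by
      intro ha hb
      simp only [List.head?_cons, Option.some.injEq] at ha
      subst ha
      rw [List.getLast?_cons_cons] at hb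
      have ih := telescope_zip g (y :: t) y b rfl hb
      simp only [List.tail_cons, List.zip_cons_cons, List.map_cons, List.sum_cons] at ih ⊢
      rw [ih]; ring

lemma chain'_mem_zip {R : α → α → Prop} :
    ∀ {p : List α}, p.Chain' R → ∀ e ∈ p.zip p.tail, R e.1 e.2
  | [], _, e, he => by simp at he
  | [x], _, e, he => by simp at he
  | x :: y :: t, h, e, he => by
      rw [List.Chain', List.isChain_cons_cons] at h
      simp only [List.tail_cons, List.zip_cons_cons, List.mem_cons] at he
      rcases he with rfl | he
      · exact h.1
      · exact chain'_mem_zip h.2 e he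

lemma map_fst_zip_eq_take : ∀ (l l' : List α), (l.zip l').map Prod.fst = l.take l'.length
  | [], l' => by simp
  | x :: t, [] => by simp
  | x :: t, y :: t' => by
      simp [map_fst_zip_eq_take t t']

lemma nodup_zip_tail {p : List α} (h : p.Nodup) : (p.zip p.tail).Nodup := by
  apply List.Nodup.of_map Prod.fst
  rw [map_fst_zip_eq_take]
  exact ((List.take_sublist _ _).nodup h)

lemma head_ne_last {p : List α} (hn : p.Nodup) (hl : 2 ≤ p.length)
    {a b : α} (ha : p.head? = some a) (hb : p.getLast? = some b) : a ≠ b := by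
  match p, hl with
  | x :: y :: t, _ =>
    simp only [List.head?_cons, Option.some.injEq] at ha
    subst ha
    rw [List.getLast?_cons_cons] at hb
    have hbmem : b ∈ y :: t := List.mem_of_mem_getLast? hb
    intro h; subst h
    exact (List.nodup_cons.mp hn).1 hbmem

lemma zip_tail_length {p : List α} (hl : 1 ≤ p.length) :
    (p.zip p.tail).length = p.length - 1 := by
  rw [List.length_zip, List.length_tail]
  omega

lemma path_sq_bound [DecidableEq α] (g : α → ℝ) {p : List α} (hn : p.Nodup) (hl : 2 ≤ p.length)
    {a b : α} (ha : p.head? = some a) (hb : p.getLast? = some b) :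
    (g a - g b) ^ 2 ≤ ((p.length : ℝ) - 1) *
      ∑ e ∈ (p.zip p.tail).toFinset, (g e.1 - g e.2) ^ 2 := by
  have hznd := nodup_zip_tail hn
  have h1 : g a - g b = ∑ e ∈ (p.zip p.tail).toFinset, (g e.1 - g e.2) := by
    rw [List.sum_toFinset _ hznd]
    exact (telescope_zip g p a b ha hb).symm
  have h2 := sq_sum_le_card_mul_sum_sq (s := (p.zip p.tail).toFinset)
    (f := fun e => g e.1 - g e.2)
  rw [← h1] at h2
  have hcard : ((p.zip p.tail).toFinset.card : ℝ) = (p.length : ℝ) - 1 := by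
    rw [List.toFinset_card_of_nodup hznd, zip_tail_length (by omega)]
    have : (1:ℕ) ≤ p.length := by omega
    push_cast [Nat.cast_sub this]
    ring
  rw [hcard] at h2
  exact h2

end helpers

/-- A simple path in the transition graph of `P`: a list of pairwise distinct states,
with at least two states, whose consecutive pairs are edges (positive transition
probability between distinct states). -/
def IsSimplePath {Ω : Type*} [Fintype Ω] [DecidableEq Ω]
    (P : Matrix Ω Ω ℝ) (p : List Ω) : Prop :=
  p.Nodup ∧ 2 ≤ p.length ∧ p.Chain' (fun a b => a ≠ b ∧ 0 < P a b)

/-- multicommodity flow bound on eigenvalues, Sinclair. -/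
theorem eigenvalue_le_of_multicommodity_flow
    {Ω : Type*} [Fintype Ω] [DecidableEq Ω] [Nonempty Ω]
    (P : Matrix Ω Ω ℝ) (μ : Ω → ℝ)
    (hP_nonneg : ∀ x y, 0 ≤ P x y)
    (hP_row : ∀ x, ∑ y, P x y = 1)
    (hirr : ∀ x y, ∃ t : ℕ, 0 < (P ^ t) x y)
    (hμ_pos : ∀ x, 0 < μ x)
    (hμ_sum : ∑ x, μ x = 1)
    (hrev : ∀ x y, μ x * P x y = μ y * P y x)
    -- `H` is the (finite) set of all simple paths between pairs of distinct states
    (H : Finset (List Ω))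
    (hH : ∀ p : List Ω, p ∈ H ↔ IsSimplePath P p)
    -- `f` is a multicommodity flow: nonnegative, and for distinct `X, Y` the flow routed
    -- along simple paths from `X` to `Y` totals `μ X * μ Y`
    (f : List Ω → ℝ)
    (hf_nonneg : ∀ p, 0 ≤ f p)
    (hflow : ∀ X Y : Ω, X ≠ Y →
      ∑ p ∈ H.filter (fun p => p.head? = some X ∧ p.getLast? = some Y), f p = μ X * μ Y)
    -- `ρ` is the maximum over edges `e = (X,Y)` of `(1/Q(e)) ∑_{p ∋ e} f(p) len(p)`,
    -- where `Q(e) = μ X * P X Y` and `len(p)` is the number of edges of `p`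
    (ρ : ℝ)
    (hρ : IsGreatest {r : ℝ | ∃ X Y : Ω, X ≠ Y ∧ 0 < P X Y ∧
      r = (1 / (μ X * P X Y)) *
        ∑ p ∈ H.filter (fun p => (X, Y) ∈ p.zip p.tail),
          f p * ((p.length : ℝ) - 1)} ρ) :
    ∀ lam : ℝ, Module.End.HasEigenvalue (Matrix.toLin' P) lam → lam ≠ 1 →
      lam ≤ 1 - 1 / ρ := by
  intro lam hlam hne
  obtain ⟨φ, hφ⟩ := hlam.exists_hasEigenvector
  have heig : ∀ x, ∑ y, P x y * φ y = lam * φ x := by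
    intro x
    have h := hφ.apply_eq_smul
    have h2 := congrFun h x
    simpa [Matrix.toLin'_apply, Matrix.mulVec, dotProduct] using h2
  have hcol : ∀ y, ∑ x, μ x * P x y = μ y := by
    intro y
    calc ∑ x, μ x * P x y = ∑ x, μ y * P y x := Finset.sum_congr rfl fun x _ => hrev x y
      _ = μ y := by rw [← Finset.mul_sum, hP_row, mul_one]
  set S := ∑ x, μ x * φ x ^ 2 with hSdef
  have hS : 0 < S := by
    obtain ⟨x, hx⟩ := Function.ne_iff.mp hφ.2
    simp only [Pi.zero_apply] at hx
    refine Finset.sum_pos' (fun i _ => mul_nonneg (hμ_pos i).le (sq_nonneg _)) ⟨x, mem_univ x, ?_⟩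
    have : (0:ℝ) < φ x ^ 2 := by rcases Ne.lt_or_gt hx with h | h <;> nlinarith
    exact mul_pos (hμ_pos x) this
  -- orthogonality to constants
  have horth : ∑ x, μ x * φ x = 0 := by
    have h1 : ∑ x, μ x * (∑ y, P x y * φ y) = ∑ y, μ y * φ y := by
      calc ∑ x, μ x * (∑ y, P x y * φ y) = ∑ x, ∑ y, (μ x * P x y) * φ y := by
            simp_rw [Finset.mul_sum, mul_assoc]
        _ = ∑ y, ∑ x, (μ x * P x y) * φ y := Finset.sum_comm
        _ = ∑ y, μ y * φ y := by
            refine Finset.sum_congr rfl fun y _ => ?_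
            rw [← Finset.sum_mul, hcol y]
    have h2 : ∑ x, μ x * (∑ y, P x y * φ y) = lam * ∑ x, μ x * φ x := by
      simp_rw [heig]
      rw [Finset.mul_sum]
      exact Finset.sum_congr rfl fun x _ => by ring
    have h3 : (1 - lam) * ∑ x, μ x * φ x = 0 := by
      rw [h2] at h1; linarith [h1]
    have h4 : (1 : ℝ) - lam ≠ 0 := sub_ne_zero.mpr (Ne.symm hne)
    rcases mul_eq_zero.mp h3 with h | h
    · exact absurd h h4
    · exact h
  -- Dirichlet form identity
  have hD2 : ∑ x, ∑ y, μ x * P x y * (φ x - φ y) ^ 2 = 2 * (1 - lam) * S := by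
    have expand : ∀ x y : Ω, μ x * P x y * (φ x - φ y) ^ 2 =
        (μ x * φ x ^ 2) * P x y - 2 * ((μ x * φ x) * (P x y * φ y)) +
          (μ x * P x y) * φ y ^ 2 := fun x y => by ring
    simp_rw [expand, Finset.sum_add_distrib, Finset.sum_sub_distrib]
    have hA1 : ∑ x, ∑ y, (μ x * φ x ^ 2) * P x y = S := by
      refine Finset.sum_congr rfl fun x _ => ?_
      rw [← Finset.mul_sum, hP_row, mul_one]
    have hA2 : ∑ x, ∑ y, 2 * ((μ x * φ x) * (P x y * φ y)) = 2 * (lam * S) := by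
      have : ∀ x : Ω, ∑ y, 2 * ((μ x * φ x) * (P x y * φ y)) =
          2 * (lam * (μ x * φ x ^ 2)) := by
        intro x
        rw [← Finset.mul_sum, ← Finset.mul_sum, heig x]
        ring
      simp_rw [this]
      rw [← Finset.mul_sum, ← Finset.mul_sum]
    have hA3 : ∑ x, ∑ y, (μ x * P x y) * φ y ^ 2 = S := by
      rw [Finset.sum_comm]
      refine Finset.sum_congr rfl fun y _ => ?_
      rw [← Finset.sum_mul, hcol y]
    rw [hA1, hA2, hA3]; ring
  -- variance identity
  have hV2 : ∑ x, ∑ y, μ x * μ y * (φ x - φ y) ^ 2 = 2 * S := by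
    have expand : ∀ x y : Ω, μ x * μ y * (φ x - φ y) ^ 2 =
        (μ x * φ x ^ 2) * μ y - 2 * ((μ x * φ x) * (μ y * φ y)) +
          μ x * (μ y * φ y ^ 2) := fun x y => by ring
    simp_rw [expand, Finset.sum_add_distrib, Finset.sum_sub_distrib]
    have hB1 : ∑ x, ∑ y, (μ x * φ x ^ 2) * μ y = S := by
      refine Finset.sum_congr rfl fun x _ => ?_
      rw [← Finset.mul_sum, hμ_sum, mul_one]
    have hB2 : ∑ x : Ω, ∑ y : Ω, 2 * ((μ x * φ x) * (μ y * φ y)) = 0 := by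
      have : ∀ x : Ω, ∑ y, 2 * ((μ x * φ x) * (μ y * φ y)) = 0 := by
        intro x
        rw [← Finset.mul_sum, ← Finset.mul_sum, horth, mul_zero, mul_zero]
      simp_rw [this, Finset.sum_const_zero]
    have hB3 : ∑ x, ∑ y, μ x * (μ y * φ y ^ 2) = S := by
      rw [Finset.sum_comm]
      refine Finset.sum_congr rfl fun y _ => ?_
      rw [← Finset.sum_mul, hμ_sum, one_mul]
    rw [hB1, hB2, hB3]; ring
  -- congestion bound per edge
  set SP : Ω → Ω → ℝ := fun X Y =>
    ∑ p ∈ H.filter (fun p => (X, Y) ∈ p.zip p.tail), f p * ((p.length : ℝ) - 1) with hSPdef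
  have hlen_nonneg : ∀ p ∈ H, (0:ℝ) ≤ (p.length : ℝ) - 1 := by
    intro p hp
    have h2 := ((hH p).mp hp).2.1
    have : (2:ℝ) ≤ (p.length : ℝ) := by exact_mod_cast h2
    linarith
  have hSP_nonneg : ∀ X Y, 0 ≤ SP X Y := by
    intro X Y
    refine Finset.sum_nonneg fun p hp => ?_
    exact mul_nonneg (hf_nonneg p) (hlen_nonneg p (Finset.mem_filter.mp hp).1)
  have hρ0 : 0 ≤ ρ := by
    obtain ⟨X, Y, hXY, hPXY, hr⟩ := hρ.1
    rw [hr]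
    have hQ : 0 < μ X * P X Y := mul_pos (hμ_pos X) hPXY
    exact mul_nonneg (by positivity) (hSP_nonneg X Y)
  have hedge : ∀ X Y : Ω, SP X Y ≤ ρ * (μ X * P X Y) := by
    intro X Y
    by_cases h : X ≠ Y ∧ 0 < P X Y
    · have hQ : 0 < μ X * P X Y := mul_pos (hμ_pos X) h.2
      have hle := hρ.2 ⟨X, Y, h.1, h.2, rfl⟩
      rw [one_div, inv_mul_le_iff₀ hQ] at hle
      exact hle.trans_eq (mul_comm _ _)
    · have hempty : H.filter (fun p => (X, Y) ∈ p.zip p.tail) = ∅ := by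
        refine Finset.filter_eq_empty_iff.mpr fun {p} hp hmem => ?_
        have hc := chain'_mem_zip ((hH p).mp hp).2.2 (X, Y) hmem
        exact h ⟨hc.1, hc.2⟩
      have : SP X Y = 0 := by rw [hSPdef]; simp only [hempty, Finset.sum_empty]
      rw [this]
      exact mul_nonneg hρ0 (mul_nonneg (hμ_pos X).le (hP_nonneg X Y))
  -- fibration of H by endpoints
  have hfib : ∀ t : List Ω → ℝ,
      ∑ X : Ω, ∑ Y : Ω, ∑ p ∈ H.filter (fun p => p.head? = some X ∧ p.getLast? = some Y), t p
        = ∑ p ∈ H, t p := by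
    intro t
    simp_rw [Finset.sum_filter]
    rw [← Finset.sum_product', Finset.sum_comm]
    refine Finset.sum_congr rfl fun p hp => ?_
    rw [Finset.univ_product_univ, Fintype.sum_prod_type]
    have hpl := ((hH p).mp hp).2.1
    have hpne : p ≠ [] := by intro h; subst h; simp at hpl
    obtain ⟨hd, td, rfl⟩ := List.exists_cons_of_ne_nil hpne
    have hlst := List.getLast?_eq_getLast_of_ne_nil (l := hd :: td) (by simp)
    simp only [List.head?_cons, hlst, Option.some.injEq]
    simp [ite_and, Finset.sum_ite_eq]
  -- the triple-sum middle quantity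
  have step1 : ∑ x, ∑ y, μ x * μ y * (φ x - φ y) ^ 2 ≤
      ∑ X : Ω, ∑ Y : Ω,
        ∑ p ∈ H.filter (fun p => p.head? = some X ∧ p.getLast? = some Y),
          f p * (((p.length : ℝ) - 1) *
            ∑ e ∈ (p.zip p.tail).toFinset, (φ e.1 - φ e.2) ^ 2) := by
    refine Finset.sum_le_sum fun X _ => Finset.sum_le_sum fun Y _ => ?_
    by_cases hxy : X = Y
    · subst hxy
      have : μ X * μ X * (φ X - φ X) ^ 2 = 0 := by ring
      rw [this]
      refine Finset.sum_nonneg fun p hp => ?_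
      exact mul_nonneg (hf_nonneg p) (mul_nonneg
        (hlen_nonneg p (Finset.mem_filter.mp hp).1)
        (Finset.sum_nonneg fun e _ => sq_nonneg _))
    · have hLHS : μ X * μ Y * (φ X - φ Y) ^ 2 =
          ∑ p ∈ H.filter (fun p => p.head? = some X ∧ p.getLast? = some Y),
            f p * (φ X - φ Y) ^ 2 := by
        rw [← Finset.sum_mul, hflow X Y hxy]
      rw [hLHS]
      refine Finset.sum_le_sum fun p hp => ?_
      obtain ⟨hpH, hhd, hlst⟩ := Finset.mem_filter.mp hp
      obtain ⟨hnd, hpl, _⟩ := (hH p).mp hpH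
      exact mul_le_mul_of_nonneg_left (path_sq_bound φ hnd hpl hhd hlst) (hf_nonneg p)
  have step2 : ∑ X : Ω, ∑ Y : Ω,
        ∑ p ∈ H.filter (fun p => p.head? = some X ∧ p.getLast? = some Y),
          f p * (((p.length : ℝ) - 1) *
            ∑ e ∈ (p.zip p.tail).toFinset, (φ e.1 - φ e.2) ^ 2)
      = ∑ p ∈ H, f p * (((p.length : ℝ) - 1) *
            ∑ e ∈ (p.zip p.tail).toFinset, (φ e.1 - φ e.2) ^ 2) :=
    hfib _
  have step3 : ∑ p ∈ H, f p * (((p.length : ℝ) - 1) *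
        ∑ e ∈ (p.zip p.tail).toFinset, (φ e.1 - φ e.2) ^ 2)
      = ∑ e : Ω × Ω, (φ e.1 - φ e.2) ^ 2 * SP e.1 e.2 := by
    have hins : ∀ p : List Ω, ∑ e ∈ (p.zip p.tail).toFinset, (φ e.1 - φ e.2) ^ 2 =
        ∑ e : Ω × Ω, if e ∈ p.zip p.tail then (φ e.1 - φ e.2) ^ 2 else 0 := by
      intro p
      simp_rw [← List.mem_toFinset]
      rw [Finset.sum_ite_mem, Finset.univ_inter]
    simp_rw [hins, Finset.mul_sum, mul_ite, mul_zero]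
    rw [Finset.sum_comm]
    refine Finset.sum_congr rfl fun e _ => ?_
    rw [← Finset.sum_filter, hSPdef]
    simp only
    have hfil : H.filter (fun p => e ∈ p.zip p.tail)
        = H.filter (fun p => (e.1, e.2) ∈ p.zip p.tail) := by
      simp
    rw [← hfil, Finset.mul_sum]
    exact Finset.sum_congr rfl fun p _ => by ring
  have step4 : ∑ e : Ω × Ω, (φ e.1 - φ e.2) ^ 2 * SP e.1 e.2
      ≤ ∑ e : Ω × Ω, (φ e.1 - φ e.2) ^ 2 * (ρ * (μ e.1 * P e.1 e.2)) :=
    Finset.sum_le_sum fun e _ =>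
      mul_le_mul_of_nonneg_left (hedge e.1 e.2) (sq_nonneg _)
  have step5 : ∑ e : Ω × Ω, (φ e.1 - φ e.2) ^ 2 * (ρ * (μ e.1 * P e.1 e.2))
      = ρ * ∑ x, ∑ y, μ x * P x y * (φ x - φ y) ^ 2 := by
    rw [Finset.mul_sum, Fintype.sum_prod_type]
    refine Finset.sum_congr rfl fun x _ => ?_
    rw [Finset.mul_sum]
    exact Finset.sum_congr rfl fun y _ => by ring
  have key : 2 * S ≤ ρ * (2 * (1 - lam) * S) := by
    calc 2 * S = ∑ x, ∑ y, μ x * μ y * (φ x - φ y) ^ 2 := hV2.symm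
      _ ≤ _ := step1
      _ = _ := step2
      _ = _ := step3
      _ ≤ _ := step4
      _ = ρ * ∑ x, ∑ y, μ x * P x y * (φ x - φ y) ^ 2 := step5
      _ = ρ * (2 * (1 - lam) * S) := by rw [hD2]
  have h1 : 1 ≤ ρ * (1 - lam) := by
    have h2S : (0:ℝ) < 2 * S := by linarith
    refine le_of_mul_le_mul_left ?_ h2S
    have : ρ * (2 * (1 - lam) * S) = 2 * S * (ρ * (1 - lam)) := by ring
    linarith [key]
  have hρpos : 0 < ρ := by
    rcases lt_or_eq_of_le hρ0 with h | h
    · exact h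
    · exfalso; rw [← h] at h1; simp at h1; linarith
  have h2 : 1 / ρ ≤ 1 - lam := by
    rw [div_le_iff₀ hρpos]
    linarith [h1]
  linarith
end

section
/- Let V be a finite set, C a collection of subsets of V, F : 2^V → ℝ, and ζ ≥ 0 a real number such that |F(S) + F(T) − F(S∩T) − F(S∪T)| ≤ ζ for all S, T ∈ C. Suppose X, Y, T ∈ C satisfy X∩Y ⊆ T ⊆ X∪Y, and that σ = X△Y△T also belongs to C. Then F(X) + F(Y) ≤ F(T) + F(σ) + 2ζ. (In particular, T∪σ = X∪Y and T∩σ = X∩Y.) -/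
open Finset

/-- the key inequality controlling the flow argument:
`F(X) + F(Y) ≤ F(T) + F(X△Y△T) + 2ζ` whenever `X∩Y ⊆ T ⊆ X∪Y` and all four sets lie
in `C`.  The triple symmetric difference is written `symmDiff (symmDiff X Y) T`. -/
theorem flow_key_inequality
    {α : Type*} [Fintype α] [DecidableEq α]
    (C : Set (Finset α)) (F : Finset α → ℝ)
    (ζ : ℝ) (hζ0 : 0 ≤ ζ)
    (hbound : ∀ S ∈ C, ∀ T ∈ C, |F S + F T - F (S ∩ T) - F (S ∪ T)| ≤ ζ)
    (X Y T : Finset α) (hX : X ∈ C) (hY : Y ∈ C) (hT : T ∈ C)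
    (hsub1 : X ∩ Y ⊆ T) (hsub2 : T ⊆ X ∪ Y)
    (hσ : symmDiff (symmDiff X Y) T ∈ C) :
    F X + F Y ≤ F T + F (symmDiff (symmDiff X Y) T) + 2 * ζ ∧
    T ∪ symmDiff (symmDiff X Y) T = X ∪ Y ∧
    T ∩ symmDiff (symmDiff X Y) T = X ∩ Y := by
  have hu : T ∪ symmDiff (symmDiff X Y) T = X ∪ Y := by
    ext a
    simp only [Finset.mem_union, Finset.mem_symmDiff]
    have h1 : a ∈ X → a ∈ Y → a ∈ T := fun hx hy => hsub1 (Finset.mem_inter.2 ⟨hx, hy⟩)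
    have h2 : a ∈ T → a ∈ X ∨ a ∈ Y := fun ht => Finset.mem_union.1 (hsub2 ht)
    tauto
  have hi : T ∩ symmDiff (symmDiff X Y) T = X ∩ Y := by
    ext a
    simp only [Finset.mem_inter, Finset.mem_symmDiff]
    have h1 : a ∈ X → a ∈ Y → a ∈ T := fun hx hy => hsub1 (Finset.mem_inter.2 ⟨hx, hy⟩)
    have h2 : a ∈ T → a ∈ X ∨ a ∈ Y := fun ht => Finset.mem_union.1 (hsub2 ht)
    tauto
  refine ⟨?_, hu, hi⟩
  have hXY := (abs_le.1 (hbound X hX Y hY)).2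
  have hTσ := (abs_le.1 (hbound T hT _ hσ)).1
  rw [hu, hi] at hTσ
  linarith
end
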